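/- Let G be a connected (K₂ ∪ 3K₁)-free graph and S ⊆ V(G) a cut set such that G − S has at least three components. If G − S has a nontrivial component (a component with at least two vertices), then G − S has exactly three components. -/

import Mathlib

open SimpleGraph

/-- The disjoint union of an edge (on vertices 0,1) and `k` isolated vertices. -/
def K2uK (k : ℕ) : SimpleGraph (Fin (k + 2)) :=
  SimpleGraph.fromRel (fun a b => a = 0 ∧ b = 1)

/-- `G` contains no induced copy of `H`. -/
def HFree {α β : Type*} (H : SimpleGraph α) (G : SimpleGraph β) : Prop :=
  IsEmpty (H ↪g G)

/-- The number of connected components of a graph. -/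
noncomputable def numComp {V : Type*} (G : SimpleGraph V) : ℕ :=
  Nat.card G.ConnectedComponent

/-- `S` is a cut set of `G`: removing `S` leaves at least two components. -/
def IsCutSet {V : Type*} (G : SimpleGraph V) (S : Set V) : Prop :=
  2 ≤ numComp (G.induce (Sᶜ : Set V))

lemma aux {V : Type*} (G : SimpleGraph V) (x y u v w : V)
    (hxy : G.Adj x y)
    (h1 : ¬G.Adj x u) (h2 : ¬G.Adj x v) (h3 : ¬G.Adj x w)
    (h4 : ¬G.Adj y u) (h5 : ¬G.Adj y v) (h6 : ¬G.Adj y w)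
    (h7 : ¬G.Adj u v) (h8 : ¬G.Adj u w) (h9 : ¬G.Adj v w)
    (n1 : x ≠ u) (n2 : x ≠ v) (n3 : x ≠ w)
    (n4 : y ≠ u) (n5 : y ≠ v) (n6 : y ≠ w)
    (n7 : u ≠ v) (n8 : u ≠ w) (n9 : v ≠ w) :
    Nonempty ((K2uK 3) ↪g G) := by
  have nxy : x ≠ y := hxy.ne
  have h1' : ¬G.Adj u x := fun h => h1 h.symm
  have h2' : ¬G.Adj v x := fun h => h2 h.symm
  have h3' : ¬G.Adj w x := fun h => h3 h.symm
  have h4' : ¬G.Adj u y := fun h => h4 h.symm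
  have h5' : ¬G.Adj v y := fun h => h5 h.symm
  have h6' : ¬G.Adj w y := fun h => h6 h.symm
  have h7' : ¬G.Adj v u := fun h => h7 h.symm
  have h8' : ¬G.Adj w u := fun h => h8 h.symm
  have h9' : ¬G.Adj w v := fun h => h9 h.symm
  refine ⟨⟨⟨![x,y,u,v,w], ?_⟩, ?_⟩⟩
  · intro i j hij
    fin_cases i <;> fin_cases j <;>
      simp only [Matrix.cons_val_zero, Matrix.cons_val_one, Matrix.head_cons,
        Matrix.cons_val_two, Matrix.cons_val_three, Matrix.cons_val_four,
        Matrix.tail_cons, Matrix.head_fin_const] at hij <;>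
      first
        | rfl
        | simp_all
  · intro i j
    change G.Adj (![x,y,u,v,w] i) (![x,y,u,v,w] j) ↔ (K2uK 3).Adj i j
    fin_cases i <;> fin_cases j <;>
      simp [K2uK, SimpleGraph.fromRel_adj, hxy, hxy.symm, G.irrefl,
        h1, h2, h3, h4, h5, h6, h7, h8, h9,
        h1', h2', h3', h4', h5', h6', h7', h8', h9']


theorem stmt_0 {V : Type*} [Fintype V] (G : SimpleGraph V) (hconn : G.Connected)
    (hfree : HFree (K2uK 3) G) (S : Set V) (hcut : IsCutSet G S)
    (h3 : 3 ≤ numComp (G.induce (Sᶜ : Set V)))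
    (hnontriv : ∃ D : (G.induce (Sᶜ : Set V)).ConnectedComponent, ¬ D.supp.Subsingleton) :
    numComp (G.induce (Sᶜ : Set V)) = 3 := by
  classical
  set G' := G.induce (Sᶜ : Set V) with hG'
  by_contra hne
  have h4 : 3 < numComp G' := lt_of_le_of_ne h3 (Ne.symm hne)
  obtain ⟨D, hD⟩ := hnontriv
  rw [Set.not_subsingleton_iff] at hD
  obtain ⟨a, ha, b, hb, hab⟩ := hD
  rw [ConnectedComponent.mem_supp_iff] at ha hb
  obtain ⟨p⟩ : G'.Reachable a b := ConnectedComponent.eq.mp (ha.trans hb.symm)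
  have hnil : ¬ p.Nil := SimpleGraph.Walk.not_nil_of_ne hab
  set y := p.getVert 1 with hy
  have hadj : G'.Adj a y := SimpleGraph.Walk.adj_snd hnil
  have hyD : G'.connectedComponentMk y = D :=
    (ConnectedComponent.eq.mpr hadj.reachable).symm.trans ha
  -- three other components
  have hfin : Fintype G'.ConnectedComponent := Fintype.ofFinite _
  rw [numComp, Nat.card_eq_fintype_card] at h4
  have hcard : 2 < (Finset.univ.erase D).card := by
    rw [Finset.card_erase_of_mem (Finset.mem_univ _), Finset.card_univ]
    omega
  obtain ⟨Cu, Cv, Cw, hCu, hCv, hCw, huv, huw, hvw⟩ := Finset.two_lt_card_iff.mp hcard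
  obtain ⟨u, hu⟩ := Cu.exists_rep
  obtain ⟨v, hv⟩ := Cv.exists_rep
  obtain ⟨w, hw⟩ := Cw.exists_rep
  have hu' : G'.connectedComponentMk u = Cu := hu
  have hv' : G'.connectedComponentMk v = Cv := hv
  have hw' : G'.connectedComponentMk w = Cw := hw
  have hCuD : Cu ≠ D := Finset.ne_of_mem_erase hCu
  have hCvD : Cv ≠ D := Finset.ne_of_mem_erase hCv
  have hCwD : Cw ≠ D := Finset.ne_of_mem_erase hCw
  -- key: adjacency in G between vertices of Sᶜ forces same component
  have key : ∀ s t : (Sᶜ : Set V), G.Adj s.val t.val →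
      G'.connectedComponentMk s = G'.connectedComponentMk t := by
    intro s t h
    exact ConnectedComponent.eq.mpr (SimpleGraph.Adj.reachable (by simpa [hG'] using h))
  have nadj : ∀ s t : (Sᶜ : Set V), G'.connectedComponentMk s ≠ G'.connectedComponentMk t →
      ¬ G.Adj s.val t.val ∧ s.val ≠ t.val := by
    intro s t h
    refine ⟨fun hadj => h (key s t hadj), fun he => h (by rw [Subtype.coe_injective he])⟩
  have Hau := nadj a u (by rw [ha, hu']; exact fun h => hCuD h.symm)
  have Hav := nadj a v (by rw [ha, hv']; exact fun h => hCvD h.symm)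
  have Haw := nadj a w (by rw [ha, hw']; exact fun h => hCwD h.symm)
  have Hyu := nadj y u (by rw [hyD, hu']; exact fun h => hCuD h.symm)
  have Hyv := nadj y v (by rw [hyD, hv']; exact fun h => hCvD h.symm)
  have Hyw := nadj y w (by rw [hyD, hw']; exact fun h => hCwD h.symm)
  have Huv := nadj u v (by rw [hu', hv']; exact huv)
  have Huw := nadj u w (by rw [hu', hw']; exact huw)
  have Hvw := nadj v w (by rw [hv', hw']; exact hvw)
  have hadjG : G.Adj a.val y.val := by simpa [hG'] using hadj
  have hay : a.val ≠ y.val := hadjG.ne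
  obtain ⟨hau1, hau2⟩ := Hau
  obtain ⟨hav1, hav2⟩ := Hav
  obtain ⟨haw1, haw2⟩ := Haw
  obtain ⟨hyu1, hyu2⟩ := Hyu
  obtain ⟨hyv1, hyv2⟩ := Hyv
  obtain ⟨hyw1, hyw2⟩ := Hyw
  obtain ⟨huv1, huv2⟩ := Huv
  obtain ⟨huw1, huw2⟩ := Huw
  obtain ⟨hvw1, hvw2⟩ := Hvw
  exact hfree.false (aux G a.val y.val u.val v.val w.val hadjG
    hau1 hav1 haw1 hyu1 hyv1 hyw1 huv1 huw1 hvw1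
    hau2 hav2 haw2 hyu2 hyv2 hyw2 huv2 huw2 hvw2).some
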